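/- Let m be an odd positive integer. For every C ∈ R, the number of triples (X,Y,Z) ∈ 𝒯 × 𝒯 × 𝒯 with X + Y − Z = C equals 2^{m+1} − 1 if C ∈ 𝒯, and equals 2^m − 1 otherwise. -/

import Mathlib

open Polynomial
open scoped Classical

noncomputable section S5aux

namespace S5

def cast24 : ZMod 4 →+* ZMod 2 := ZMod.castHom (show (2:ℕ) ∣ 4 by norm_num) (ZMod 2)

/-- coefficientwise map of polynomials by an arbitrary function -/
def pmap {A B : Type*} [Semiring A] [Semiring B] (u : A → B) (p : Polynomial A) :
    Polynomial B :=
  p.sum fun n a => Polynomial.C (u a) * Polynomial.X ^ n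

lemma coeff_pmap {A B : Type*} [Semiring A] [Semiring B] (u : A → B) (h0 : u 0 = 0)
    (p : Polynomial A) (n : ℕ) : (pmap u p).coeff n = u (p.coeff n) := by
  rw [pmap, Polynomial.sum_def, Polynomial.finset_sum_coeff]
  simp only [Polynomial.coeff_C_mul, Polynomial.coeff_X_pow, mul_ite, mul_one, mul_zero]
  rw [Finset.sum_ite_eq p.support n (fun i => u (p.coeff i))]
  by_cases h : n ∈ p.support
  · simp [h]
  · simp [h, Polynomial.notMem_support_iff.mp h, h0]

def lift42 : ZMod 2 → ZMod 4 := fun a => (a.val : ZMod 4)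
def half4 : ZMod 4 → ZMod 4 := fun c => ((c.val / 2 : ℕ) : ZMod 4)

lemma cast24_lift42 : ∀ a, cast24 (lift42 a) = a := by
  intro a; fin_cases a <;> rfl
lemma lift42_zero : lift42 0 = 0 := rfl
lemma half4_spec : ∀ c, cast24 c = 0 → 2 * half4 c = c := by
  intro c; fin_cases c <;> intro h
  · rfl
  · exact absurd h one_ne_zero
  · rfl
  · exact absurd h one_ne_zero
lemma half4_zero : half4 0 = 0 := rfl

lemma map_pmap_lift (q : Polynomial (ZMod 2)) : (pmap lift42 q).map cast24 = q := by
  ext n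
  rw [Polynomial.coeff_map, coeff_pmap lift42 lift42_zero, cast24_lift42]

lemma eq_two_mul_of_map_eq_zero (r : Polynomial (ZMod 4)) (h : r.map cast24 = 0) :
    r = 2 * pmap half4 r := by
  ext n
  have hc : cast24 (r.coeff n) = 0 := by
    rw [← Polynomial.coeff_map, h, Polynomial.coeff_zero]
  rw [two_mul, Polynomial.coeff_add, ← two_mul, coeff_pmap half4 half4_zero,
    half4_spec _ hc]

variable (f : Polynomial (ZMod 4))

def fbar : Polynomial (ZMod 2) := f.map cast24

def phi : AdjoinRoot f →+* AdjoinRoot (fbar f) :=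
  AdjoinRoot.lift ((AdjoinRoot.of (fbar f)).comp cast24) (AdjoinRoot.root (fbar f))
    (by rw [← Polynomial.eval₂_map]; exact AdjoinRoot.eval₂_root _)

lemma phi_mk (p : Polynomial (ZMod 4)) :
    phi f (AdjoinRoot.mk f p) = AdjoinRoot.mk (fbar f) (p.map cast24) := by
  rw [phi, AdjoinRoot.lift_mk, ← Polynomial.eval₂_map, ← AdjoinRoot.algebraMap_eq,
    ← Polynomial.aeval_def, AdjoinRoot.aeval_eq]

lemma phi_surj : Function.Surjective (phi f) := by
  intro z
  obtain ⟨q, rfl⟩ := AdjoinRoot.mk_surjective z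
  exact ⟨AdjoinRoot.mk f (pmap lift42 q), by rw [phi_mk, map_pmap_lift]⟩

lemma mem_ker (w : AdjoinRoot f) (h : phi f w = 0) : ∃ s, w = 2 * s := by
  obtain ⟨p, rfl⟩ := AdjoinRoot.mk_surjective w
  rw [phi_mk, AdjoinRoot.mk_eq_zero] at h
  obtain ⟨g, hg⟩ := h
  have h2 : (p - f * pmap lift42 g).map cast24 = 0 := by
    rw [Polynomial.map_sub, Polynomial.map_mul, map_pmap_lift,
      show f.map cast24 = fbar f from rfl, hg, sub_self]
  have h3 := eq_two_mul_of_map_eq_zero _ h2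
  refine ⟨AdjoinRoot.mk f (pmap half4 (p - f * pmap lift42 g)), ?_⟩
  have h4 : p = f * pmap lift42 g + 2 * pmap half4 (p - f * pmap lift42 g) := by
    linear_combination h3
  conv_lhs => rw [h4]
  simp only [map_add, map_mul, AdjoinRoot.mk_self, zero_mul, zero_add, map_ofNat]

lemma four_eq_zero : (4 : AdjoinRoot f) = 0 := by
  have : (4 : AdjoinRoot f) = AdjoinRoot.of f (4 : ZMod 4) := by
    rw [map_ofNat]
  rw [this, show (4 : ZMod 4) = 0 from rfl, map_zero]


variable (m : ℕ)

lemma pow_eq_of_phi_eq (hm : 0 < m) (w w' : AdjoinRoot f) (h : phi f w = phi f w') :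
    w ^ 2 ^ m = w' ^ 2 ^ m := by
  obtain ⟨s, hs⟩ := mem_ker f (w - w') (by rw [map_sub, h, sub_self])
  have h4 := four_eq_zero f
  have hsq : w ^ 2 = w' ^ 2 := by
    have hw : w = w' + 2 * s := by linear_combination hs
    rw [hw]; linear_combination (w' * s + s ^ 2) * h4
  have hm2 : 2 ^ m = 2 * 2 ^ (m - 1) := by
    rw [← pow_succ']; congr 1; omega
  rw [hm2, pow_mul, pow_mul, hsq]

def tau (a : AdjoinRoot (fbar f)) : AdjoinRoot f :=
  Function.surjInv (phi_surj f) a ^ 2 ^ m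

lemma phi_tau (hK : ∀ a : AdjoinRoot (fbar f), a ^ 2 ^ m = a) (a : AdjoinRoot (fbar f)) :
    phi f (tau f m a) = a := by
  rw [tau, map_pow, Function.surjInv_eq (phi_surj f) a, hK]

lemma pow_eq_tau (hm : 0 < m) (w : AdjoinRoot f) : w ^ 2 ^ m = tau f m (phi f w) :=
  pow_eq_of_phi_eq f m hm w _ (Function.surjInv_eq (phi_surj f) _).symm

lemma tau_mem (hm : 0 < m) (hK : ∀ a : AdjoinRoot (fbar f), a ^ 2 ^ m = a)
    (a : AdjoinRoot (fbar f)) : tau f m a ^ 2 ^ m = tau f m a := by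
  have h := pow_eq_tau f m hm (tau f m a)
  rwa [phi_tau f m hK] at h

lemma eq_tau_of_mem (hm : 0 < m) (z : AdjoinRoot f) (hz : z ^ 2 ^ m = z) :
    z = tau f m (phi f z) := by
  rw [← pow_eq_tau f m hm z, hz]

lemma tau_mul (hm : 0 < m) (hK : ∀ a : AdjoinRoot (fbar f), a ^ 2 ^ m = a)
    (a b : AdjoinRoot (fbar f)) : tau f m a * tau f m b = tau f m (a * b) := by
  have h1 : (tau f m a * tau f m b) ^ 2 ^ m = tau f m a * tau f m b := by
    rw [mul_pow, tau_mem f m hm hK, tau_mem f m hm hK]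
  have h2 := eq_tau_of_mem f m hm _ h1
  rwa [map_mul, phi_tau f m hK, phi_tau f m hK] at h2

lemma tau_pow (hm : 0 < m) (hK : ∀ a : AdjoinRoot (fbar f), a ^ 2 ^ m = a)
    (a : AdjoinRoot (fbar f)) (k : ℕ) : tau f m a ^ 2 ^ k = tau f m (a ^ 2 ^ k) := by
  have h1 : (tau f m a ^ 2 ^ k) ^ 2 ^ m = tau f m a ^ 2 ^ k := by
    rw [← pow_mul, mul_comm, pow_mul, tau_mem f m hm hK]
  have h2 := eq_tau_of_mem f m hm _ h1
  rwa [map_pow, phi_tau f m hK] at h2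

lemma binom {R' : Type*} [CommRing R'] (h4 : (4 : R') = 0) (k : ℕ) (u v : R') :
    (u + v) ^ 2 ^ (k + 1) = u ^ 2 ^ (k + 1) + v ^ 2 ^ (k + 1) + 2 * (u * v) ^ 2 ^ k := by
  induction k with
  | zero => norm_num; ring
  | succ j ih =>
    have e : ∀ w : R', w ^ 2 ^ (j + 2) = (w ^ 2 ^ (j + 1)) ^ 2 := by
      intro w; rw [← pow_mul, pow_succ]
    have e' : (u * v) ^ 2 ^ (j + 1) = ((u * v) ^ 2 ^ j) ^ 2 := by
      rw [← pow_mul, pow_succ]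
    have hXY : u ^ 2 ^ (j + 1) * v ^ 2 ^ (j + 1) = ((u * v) ^ 2 ^ j) ^ 2 := by
      rw [← mul_pow, ← pow_mul, pow_succ]
    rw [e (u + v), e u, e v, e', ih]
    linear_combination 2 * hXY +
      (((u * v) ^ 2 ^ j) ^ 2 + u ^ 2 ^ (j + 1) * (u * v) ^ 2 ^ j +
        v ^ 2 ^ (j + 1) * (u * v) ^ 2 ^ j) * h4

lemma star (hm : 0 < m) (hK : ∀ a : AdjoinRoot (fbar f), a ^ 2 ^ m = a)
    (a b : AdjoinRoot (fbar f)) :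
    tau f m a + tau f m b = tau f m (a + b) + 2 * tau f m ((a * b) ^ 2 ^ (m - 1)) := by
  have h4 := four_eq_zero f
  have hb := binom h4 (m - 1) (tau f m a) (tau f m b)
  rw [show m - 1 + 1 = m from by omega] at hb
  rw [tau_mem f m hm hK, tau_mem f m hm hK, tau_mul f m hm hK, tau_pow f m hm hK] at hb
  have h2 := pow_eq_tau f m hm (tau f m a + tau f m b)
  rw [map_add, phi_tau f m hK, phi_tau f m hK] at h2
  linear_combination h2 - hb - tau f m ((a * b) ^ 2 ^ (m - 1)) * h4

lemma two_tau_add (hm : 0 < m) (hK : ∀ a : AdjoinRoot (fbar f), a ^ 2 ^ m = a)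
    (a b : AdjoinRoot (fbar f)) :
    2 * tau f m a + 2 * tau f m b = 2 * tau f m (a + b) := by
  have h4 := four_eq_zero f
  have hs := star f m hm hK a b
  linear_combination 2 * hs + tau f m ((a * b) ^ 2 ^ (m - 1)) * h4

lemma lhs_eq (hm : 0 < m) (hK : ∀ a : AdjoinRoot (fbar f), a ^ 2 ^ m = a)
    (x y z : AdjoinRoot (fbar f)) :
    tau f m x + tau f m y - tau f m z =
      tau f m (x + y + z) +
        2 * tau f m (((x + y) * z) ^ 2 ^ (m - 1) + (x * y) ^ 2 ^ (m - 1) + z) := by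
  have h4 := four_eq_zero f
  have s1 := star f m hm hK x y
  have s2 := star f m hm hK (x + y) z
  have s3 := two_tau_add f m hm hK (((x + y) * z) ^ 2 ^ (m - 1)) ((x * y) ^ 2 ^ (m - 1))
  have s4 := two_tau_add f m hm hK
    (((x + y) * z) ^ 2 ^ (m - 1) + (x * y) ^ 2 ^ (m - 1)) z
  linear_combination s1 + s2 + s3 + s4 - tau f m z * h4

lemma two_ne_zero' (hmonic : f.Monic) (hdeg : 0 < f.natDegree) :
    (2 : AdjoinRoot f) ≠ 0 := by
  intro h
  have h2 : AdjoinRoot.mk f (2 : Polynomial (ZMod 4)) = 0 := by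
    rw [map_ofNat]; exact h
  rw [AdjoinRoot.mk_eq_zero] at h2
  obtain ⟨g, hg⟩ := h2
  have hgne : g ≠ 0 := by
    rintro rfl
    rw [mul_zero] at hg
    have h0 := congrArg (fun p => Polynomial.coeff p 0) hg
    simp only [Polynomial.coeff_ofNat_zero, Polynomial.coeff_zero] at h0
    exact absurd h0 (by decide)
  have hnd : (2 : Polynomial (ZMod 4)).natDegree = 0 := Polynomial.natDegree_ofNat (n := 2)
  rw [hg, hmonic.natDegree_mul' hgne] at hnd
  omega

lemma isUnit_of_phi_ne [Fact (Irreducible (fbar f))] (w : AdjoinRoot f)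
    (h : phi f w ≠ 0) : IsUnit w := by
  obtain ⟨v, hv⟩ := phi_surj f (phi f w)⁻¹
  have h1 : phi f (w * v) = 1 := by rw [map_mul, hv, mul_inv_cancel₀ h]
  obtain ⟨s, hs⟩ := mem_ker f (w * v - 1) (by rw [map_sub, h1, map_one, sub_self])
  have h4 := four_eq_zero f
  have hu : (w * v) * (1 - 2 * s) = 1 := by
    linear_combination (1 - 2 * s) * hs - s ^ 2 * h4
  exact isUnit_of_mul_isUnit_left (IsUnit.of_mul_eq_one _ hu)

lemma phi_eq_zero_of_two_mul (hmonic : f.Monic) (hdeg : 0 < f.natDegree)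
    [Fact (Irreducible (fbar f))] (w : AdjoinRoot f) (h : 2 * w = 0) :
    phi f w = 0 := by
  by_contra hne
  obtain ⟨b, hb⟩ := (isUnit_of_phi_ne f w hne).exists_right_inv
  have : (2 : AdjoinRoot f) = 0 := by
    calc (2 : AdjoinRoot f) = 2 * (w * b) := by rw [hb, mul_one]
    _ = (2 * w) * b := by ring
    _ = 0 := by rw [h, zero_mul]
  exact two_ne_zero' f hmonic hdeg this

lemma two_mul_eq_zero_of_phi (w : AdjoinRoot f) (h : phi f w = 0) : 2 * w = 0 := by
  obtain ⟨s, rfl⟩ := mem_ker f w h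
  linear_combination s * four_eq_zero f


lemma two_K : (2 : AdjoinRoot (fbar f)) = 0 := by
  have h : (2 : AdjoinRoot (fbar f)) = AdjoinRoot.of (fbar f) (2 : ZMod 2) :=
    (map_ofNat _ 2).symm
  rw [h, show (2 : ZMod 2) = 0 from rfl, map_zero]

lemma sq_inj_of_two {K' : Type*} [Field K'] (h2 : (2 : K') = 0) {a b : K'}
    (h : a ^ 2 = b ^ 2) : a = b := by
  have h0 : (a - b) ^ 2 = 0 := by linear_combination h + (b ^ 2 - a * b) * h2
  have h1 : a - b = 0 := pow_eq_zero_iff (two_ne_zero) |>.mp h0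
  linear_combination h1

lemma cond_iff (hm : 0 < m) (hmonic : f.Monic) (hdegpos : 0 < f.natDegree)
    [Fact (Irreducible (fbar f))]
    (hK : ∀ a : AdjoinRoot (fbar f), a ^ 2 ^ m = a)
    (C D : AdjoinRoot f) (hD : C - C ^ 2 ^ m = 2 * D)
    (x y z : AdjoinRoot (fbar f)) :
    tau f m x + tau f m y - tau f m z = C ↔
      (x + y + z = phi f C ∧ x * y + (x + y) * z + z ^ 2 = (phi f D) ^ 2) := by
  have h4 := four_eq_zero f
  have h2K : (2 : AdjoinRoot (fbar f)) = 0 := two_K f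
  rw [lhs_eq f m hm hK x y z]
  set e1 := ((x + y) * z) ^ 2 ^ (m - 1) with he1
  set e2 := (x * y) ^ 2 ^ (m - 1) with he2
  have hE1 : e1 ^ 2 = (x + y) * z := by
    rw [he1, ← pow_mul, ← pow_succ, show m - 1 + 1 = m from by omega]; exact hK _
  have hE2 : e2 ^ 2 = x * y := by
    rw [he2, ← pow_mul, ← pow_succ, show m - 1 + 1 = m from by omega]; exact hK _
  have hCdec : C = tau f m (phi f C) + 2 * D := by
    linear_combination hD + pow_eq_tau f m hm C
  have h2D : 2 * D = 2 * tau f m (phi f D) := by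
    have hker : phi f (D - D ^ 2 ^ m) = 0 := by
      rw [map_sub, map_pow, hK, sub_self]
    have h2z := two_mul_eq_zero_of_phi f _ hker
    have hDt := pow_eq_tau f m hm D
    linear_combination h2z + 2 * hDt
  constructor
  · intro h
    have hs : x + y + z = phi f C := by
      have hφ := congrArg (phi f) h
      rw [map_add, map_mul, phi_tau f m hK, phi_tau f m hK, map_ofNat, h2K,
        zero_mul, add_zero] at hφ
      exact hφ
    have h2e : 2 * tau f m (e1 + e2 + z) = 2 * D := by
      rw [hs] at h
      linear_combination h + hCdec
    have he : e1 + e2 + z = phi f D := by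
      by_contra hne
      have hzero : 2 * (tau f m (e1 + e2 + z) - D) = 0 := by linear_combination h2e
      have hφne : phi f (tau f m (e1 + e2 + z) - D) ≠ 0 := by
        rw [map_sub, phi_tau f m hK]
        exact sub_ne_zero.mpr hne
      obtain ⟨b, hb⟩ := (isUnit_of_phi_ne f _ hφne).exists_right_inv
      apply two_ne_zero' f hmonic hdegpos
      calc (2 : AdjoinRoot f) = 2 * ((tau f m (e1 + e2 + z) - D) * b) := by
            rw [hb, mul_one]
        _ = (2 * (tau f m (e1 + e2 + z) - D)) * b := by ring
        _ = 0 := by rw [hzero, zero_mul]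
    refine ⟨hs, ?_⟩
    rw [← he]
    linear_combination -hE1 - hE2 - (e1 * e2 + e1 * z + e2 * z) * h2K
  · rintro ⟨hs, hq⟩
    have he : e1 + e2 + z = phi f D := by
      apply sq_inj_of_two h2K
      rw [← hq]
      linear_combination hE1 + hE2 + (e1 * e2 + e1 * z + e2 * z) * h2K
    rw [hs, he]
    conv_rhs => rw [hCdec]
    linear_combination -h2D

lemma nat_helper (a b : ℕ) (h : b + a * a = (a + 1) * (a + 1)) : b = 2 * a + 1 := by
  have h2 : (a + 1) * (a + 1) = a * a + (2 * a + 1) := by ring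
  rw [h2, Nat.add_comm b (a * a)] at h
  exact Nat.add_left_cancel h

lemma count_pairs (K' : Type*) [Field K'] [Fintype K'] (h2 : (2 : K') = 0) (c d : K') :
    Nat.card {p : K' × K' × K' //
      p.1 + p.2.1 + p.2.2 = c ∧ p.1 * p.2.1 + (p.1 + p.2.1) * p.2.2 + p.2.2 ^ 2 = d} =
    if d = 0 then 2 * Fintype.card K' - 1 else Fintype.card K' - 1 := by
  classical
  have hcompl_u : Fintype.card {u : K' // ¬ u = 0} = Fintype.card K' - 1 := by
    rw [Fintype.card_subtype_compl (fun u : K' => u = 0), Fintype.card_subtype_eq]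
  have E1 : {p : K' × K' × K' //
      p.1 + p.2.1 + p.2.2 = c ∧ p.1 * p.2.1 + (p.1 + p.2.1) * p.2.2 + p.2.2 ^ 2 = d}
      ≃ {q : K' × K' // (q.1 + c) * (q.1 + q.2) = d} :=
    { toFun := fun t => ⟨(t.1.2.1, t.1.2.2), by
        obtain ⟨⟨x, y, z⟩, h1, hQ⟩ := t
        simp only
        linear_combination hQ + (y + z) * h1 +
          (c * y + c * z - x * y - x * z - y * z - z ^ 2) * h2⟩
      invFun := fun q => ⟨(c - q.1.1 - q.1.2, q.1.1, q.1.2), by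
        obtain ⟨⟨y, z⟩, hq⟩ := q
        refine ⟨by simp only; ring, ?_⟩
        simp only
        linear_combination hq + (-(y ^ 2) - y * z) * h2⟩
      left_inv := fun t => by
        obtain ⟨⟨x, y, z⟩, h1, hQ⟩ := t
        apply Subtype.ext
        have hx : c - y - z = x := by linear_combination -h1
        show (c - y - z, y, z) = (x, y, z)
        rw [hx]
      right_inv := fun q => by
        obtain ⟨⟨y, z⟩, hq⟩ := q
        rfl }
  have E2 : {q : K' × K' // (q.1 + c) * (q.1 + q.2) = d} ≃
      {r : K' × K' // r.1 * r.2 = d} :=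
    { toFun := fun q => ⟨(q.1.1 + c, q.1.1 + q.1.2), by
        obtain ⟨⟨y, z⟩, hq⟩ := q; exact hq⟩
      invFun := fun r => ⟨(r.1.1 - c, r.1.2 - r.1.1 + c), by
        obtain ⟨⟨u, v⟩, hr⟩ := r
        simp only
        rw [show (u - c + c) * (u - c + (v - u + c)) = u * v by ring]
        exact hr⟩
      left_inv := fun q => by
        obtain ⟨⟨y, z⟩, hq⟩ := q
        apply Subtype.ext
        simp only [Prod.mk.injEq]
        exact ⟨by ring, by ring⟩
      right_inv := fun r => by
        obtain ⟨⟨u, v⟩, hr⟩ := r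
        apply Subtype.ext
        simp only [Prod.mk.injEq]
        exact ⟨by ring, by ring⟩ }
  rw [Nat.card_congr (E1.trans E2)]
  by_cases hd : d = 0
  · subst hd
    rw [if_pos rfl]
    have hpos : 0 < Fintype.card K' := Fintype.card_pos
    obtain ⟨n, hn⟩ : ∃ n, Fintype.card K' = n + 1 := ⟨Fintype.card K' - 1, by omega⟩
    have hsplit := Finset.card_filter_add_card_filter_not
      (s := (Finset.univ : Finset (K' × K'))) (p := fun r : K' × K' => r.1 * r.2 = 0)
    have hB : Fintype.card {r : K' × K' // ¬ (r.1 * r.2 = 0)} =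
        (Finset.univ.filter fun r : K' × K' => ¬ (r.1 * r.2 = 0)).card :=
      Fintype.card_subtype _
    have hC : Fintype.card {r : K' × K' // ¬ (r.1 * r.2 = 0)} = n * n := by
      rw [Fintype.card_congr
        ((Equiv.subtypeEquivRight (fun r : K' × K' => mul_ne_zero_iff)).trans
          (Equiv.subtypeProdEquivProd (p := fun u : K' => ¬ u = 0)
            (q := fun v : K' => ¬ v = 0))), Fintype.card_prod, hcompl_u, hn]
      simp
    have hA : Nat.card {r : K' × K' // r.1 * r.2 = 0} =
        (Finset.univ.filter fun r : K' × K' => r.1 * r.2 = 0).card := by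
      rw [Nat.card_eq_fintype_card, Fintype.card_subtype]
    have htot : (Finset.univ : Finset (K' × K')).card = (n + 1) * (n + 1) := by
      rw [Finset.card_univ, Fintype.card_prod, hn]
    rw [hA, hn]
    have key : (Finset.univ.filter fun r : K' × K' => r.1 * r.2 = 0).card + n * n =
        (n + 1) * (n + 1) := by
      rw [← htot, ← hsplit, ← hB, hC]
    rw [nat_helper n _ key]
    omega
  · rw [if_neg hd]
    have Ene : {r : K' × K' // r.1 * r.2 = d} ≃ {u : K' // ¬ u = 0} :=
      { toFun := fun r => ⟨r.1.1, fun h0 => hd (by rw [← r.2, h0, zero_mul])⟩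
        invFun := fun u => ⟨(u.1, u.1⁻¹ * d), by
          simp only
          rw [← mul_assoc, mul_inv_cancel₀ u.2, one_mul]⟩
        left_inv := fun r => by
          obtain ⟨⟨u, v⟩, hr⟩ := r
          have hu : u ≠ 0 := fun h0 => hd (by rw [← hr, h0, zero_mul])
          apply Subtype.ext
          have hv : u⁻¹ * d = v := by
            rw [← hr]
            show u⁻¹ * ((u, v).1 * (u, v).2) = v
            rw [show ((u, v).1 * (u, v).2) = u * v from rfl, ← mul_assoc,
              inv_mul_cancel₀ hu, one_mul]
          show (u, u⁻¹ * d) = (u, v)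
          rw [hv]
        right_inv := fun u => rfl }
    rw [Nat.card_congr Ene, Nat.card_eq_fintype_card, hcompl_u]

end S5

end S5aux

open S5

/-- With `R = GR(4,m)` realized as `(ℤ/4ℤ)[x]/(f)` and
`𝒯 = {z : z ^ 2^m = z}` the Teichmüller set (`m` odd), for every `C ∈ R` the number of
triples `(X,Y,Z) ∈ 𝒯³` with `X + Y - Z = C` equals `2^(m+1) - 1` if `C ∈ 𝒯`, and
`2^m - 1` otherwise. -/
theorem statement5 (m : ℕ) (hm : Odd m) (hmpos : 0 < m)
    (f : Polynomial (ZMod 4)) (hmonic : f.Monic) (hdeg : f.natDegree = m)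
    (hirr : Irreducible (f.map (ZMod.castHom (show (2:ℕ) ∣ 4 by norm_num) (ZMod 2))))
    (C : AdjoinRoot f) :
    Nat.card {t : AdjoinRoot f × AdjoinRoot f × AdjoinRoot f //
        t.1 ^ 2 ^ m = t.1 ∧ t.2.1 ^ 2 ^ m = t.2.1 ∧ t.2.2 ^ 2 ^ m = t.2.2 ∧
        t.1 + t.2.1 - t.2.2 = C} =
      if C ^ 2 ^ m = C then 2 ^ (m + 1) - 1 else 2 ^ m - 1 := by
  classical
  have hirr' : Irreducible (fbar f) := hirr
  haveI : Fact (Irreducible (fbar f)) := ⟨hirr'⟩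
  have hfbne : fbar f ≠ 0 := (hmonic.map cast24).ne_zero
  let pb := AdjoinRoot.powerBasis hfbne
  haveI : Fintype (AdjoinRoot (fbar f)) := Module.fintypeOfFintype pb.basis
  have hdim : pb.dim = m := by
    show (fbar f).natDegree = m
    rw [fbar, hmonic.natDegree_map cast24, hdeg]
  have hcard : Fintype.card (AdjoinRoot (fbar f)) = 2 ^ m := by
    rw [Module.card_fintype pb.basis, ZMod.card 2, Fintype.card_fin, hdim]
  have hK : ∀ a : AdjoinRoot (fbar f), a ^ 2 ^ m = a := by
    intro a
    rw [← hcard]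
    exact FiniteField.pow_card a
  have hdegpos : 0 < f.natDegree := by omega
  have hkerC : phi f (C - C ^ 2 ^ m) = 0 := by
    rw [map_sub, map_pow, hK, sub_self]
  obtain ⟨D, hD⟩ := mem_ker f _ hkerC
  have hcond := cond_iff f m hmpos hmonic hdegpos hK C D hD
  have E : {t : AdjoinRoot f × AdjoinRoot f × AdjoinRoot f //
        t.1 ^ 2 ^ m = t.1 ∧ t.2.1 ^ 2 ^ m = t.2.1 ∧ t.2.2 ^ 2 ^ m = t.2.2 ∧
        t.1 + t.2.1 - t.2.2 = C} ≃
      {p : AdjoinRoot (fbar f) × AdjoinRoot (fbar f) × AdjoinRoot (fbar f) //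
        p.1 + p.2.1 + p.2.2 = phi f C ∧
        p.1 * p.2.1 + (p.1 + p.2.1) * p.2.2 + p.2.2 ^ 2 = (phi f D) ^ 2} :=
    { toFun := fun t => ⟨(phi f t.1.1, phi f t.1.2.1, phi f t.1.2.2), by
        obtain ⟨⟨X, Y, Z⟩, h1, h2, h3, h4⟩ := t
        have hX := eq_tau_of_mem f m hmpos X h1
        have hY := eq_tau_of_mem f m hmpos Y h2
        have hZ := eq_tau_of_mem f m hmpos Z h3
        rw [hX, hY, hZ] at h4
        exact (hcond _ _ _).mp h4⟩
      invFun := fun p => ⟨(tau f m p.1.1, tau f m p.1.2.1, tau f m p.1.2.2), by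
        obtain ⟨⟨x, y, z⟩, hp⟩ := p
        exact ⟨tau_mem f m hmpos hK x, tau_mem f m hmpos hK y, tau_mem f m hmpos hK z,
          (hcond x y z).mpr hp⟩⟩
      left_inv := fun t => by
        obtain ⟨⟨X, Y, Z⟩, h1, h2, h3, h4⟩ := t
        apply Subtype.ext
        show (tau f m (phi f X), tau f m (phi f Y), tau f m (phi f Z)) = (X, Y, Z)
        rw [← eq_tau_of_mem f m hmpos X h1, ← eq_tau_of_mem f m hmpos Y h2,
          ← eq_tau_of_mem f m hmpos Z h3]
      right_inv := fun p => by
        obtain ⟨⟨x, y, z⟩, hp⟩ := p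
        apply Subtype.ext
        show (phi f (tau f m x), phi f (tau f m y), phi f (tau f m z)) = (x, y, z)
        rw [phi_tau f m hK, phi_tau f m hK, phi_tau f m hK] }
  rw [Nat.card_congr E,
    count_pairs (AdjoinRoot (fbar f)) (two_K f) (phi f C) ((phi f D) ^ 2), hcard]
  have hiff : ((phi f D) ^ 2 = 0) ↔ (C ^ 2 ^ m = C) := by
    constructor
    · intro h0
      have hφD : phi f D = 0 := pow_eq_zero_iff (two_ne_zero) |>.mp h0
      have h2D := two_mul_eq_zero_of_phi f D hφD
      linear_combination -hD - h2D
    · intro hC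
      have hD0 : 2 * D = 0 := by linear_combination -hD - hC
      have hφD := phi_eq_zero_of_two_mul f hmonic hdegpos D hD0
      rw [hφD]
      ring
  by_cases hC : C ^ 2 ^ m = C
  · rw [if_pos (hiff.mpr hC), if_pos hC]
    have h21 : (2 : ℕ) ^ (m + 1) = 2 * 2 ^ m := by rw [pow_succ]; ring
    rw [h21]
  · rw [if_neg (fun h => hC (hiff.mp h)), if_neg hC]
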